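/- Let k be a field, l ≥ 2 an integer with l!·1_k ≠ 0 (e.g., char k = 0), and c, e, r ∈ k with c ≠ 0. Suppose t = Σ_{i≥1} a_i s^i ∈ k[[s]] with a_1 ≠ 0 satisfies the differential equation (c + r·t^l)·(dt/ds) = (t/s)^{l+1}·(e + r·s^l) in k[[s]] (where t/s := Σ_{i≥1} a_i s^{i-1}). Then c = e·a_1^l and a_k = 0 for all 2 ≤ k ≤ l. -/

import Mathlib

open PowerSeries

/-- key coefficient computation for good formal coordinates of negative
log-order. If `t = Σ_{i≥1} a_i s^i` (written `t = X·v`) with `a_1 ≠ 0` satisfies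
`(c + r·t^l)·(dt/ds) = (t/s)^{l+1}·(e + r·s^l)` and `l ≥ 2` with `l!` invertible in
`k`, `c ≠ 0`, then `c = e·a_1^l` and `a_j = 0` for all `2 ≤ j ≤ l`. -/
theorem good_coordinate_coeff_vanishing
    {k : Type*} [Field k] (l : ℕ) (hl : 2 ≤ l) (hfac : (Nat.factorial l : k) ≠ 0)
    (c e r : k) (hc : c ≠ 0)
    (t v : PowerSeries k) (ht0 : constantCoeff t = 0)
    (ha1 : coeff 1 t ≠ 0) (htv : t = X * v)
    (heq : (PowerSeries.C c + PowerSeries.C r * t ^ l) * t.derivativeFun =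
      v ^ (l + 1) * (PowerSeries.C e + PowerSeries.C r * X ^ l)) :
    c = e * (coeff 1 t) ^ l ∧ ∀ j : ℕ, 2 ≤ j → j ≤ l → coeff j t = 0 := by
  set a1 := coeff 1 t with ha1def
  -- cast of small naturals nonzero
  have hcast : ∀ m : ℕ, 1 ≤ m → m ≤ l → (m : k) ≠ 0 := by
    intro m h1 h2 hm0
    obtain ⟨d, hd⟩ := Nat.dvd_factorial h1 h2
    exact hfac (by rw [hd, Nat.cast_mul, hm0, zero_mul])
  have hdvd_coeff : ∀ (f : PowerSeries k) (n m : ℕ), m < n → coeff m (X ^ n * f) = 0 := by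
    intro f n m hm
    exact X_pow_dvd_iff.mp (dvd_mul_right _ _) m hm
  have hv0 : constantCoeff v = a1 := by
    rw [ha1def, htv, ← coeff_zero_eq_constantCoeff_apply]
    exact (coeff_succ_X_mul 0 v).symm
  -- Step 1 : c = e * a1 ^ l
  have hd0 : constantCoeff t.derivativeFun = a1 := by
    erw [← coeff_zero_eq_constantCoeff_apply, coeff_derivative]
    simp [ha1def]
  have h0 := congrArg constantCoeff heq
  simp only [map_mul, map_add, map_pow, constantCoeff_C, constantCoeff_X, ht0, hv0, hd0,
    zero_pow (by omega : l ≠ 0), mul_zero, add_zero] at h0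
  -- h0 : c * a1 = a1^(l+1) * e
  have hce : c = e * a1 ^ l := by
    apply mul_right_cancel₀ ha1
    rw [h0]; ring
  refine ⟨hce, ?_⟩
  intro j
  induction j using Nat.strong_induction_on with
  | _ j IH =>
    intro h2 hjl
    obtain ⟨n, rfl⟩ : ∃ n, j = n + 1 := ⟨j - 1, by omega⟩
    have hn1 : 1 ≤ n := by omega
    -- w = v - C a1 is divisible by X^n
    have hwdvd : (X : k⟦X⟧) ^ n ∣ (v - PowerSeries.C a1) := by
      rw [X_pow_dvd_iff]
      intro m hm
      rw [map_sub, coeff_C]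
      rcases Nat.eq_zero_or_pos m with hm0 | hm0
      · subst hm0
        simp [coeff_zero_eq_constantCoeff_apply, hv0]
      · rw [if_neg (by omega), sub_zero]
        have : coeff m v = coeff (m + 1) t := by
          rw [htv, coeff_succ_X_mul]
        rw [this]
        exact IH (m + 1) (by omega) (by omega) (by omega)
    obtain ⟨u, hu⟩ := hwdvd
    have hveq : v = PowerSeries.C a1 + X ^ n * u := by
      rw [← hu]; ring
    have hu0 : coeff 0 u = coeff (n + 1) t := by
      have h1 : coeff n (X ^ n * u) = coeff 0 u := by
        simpa using coeff_X_pow_mul u n 0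
      have h2 : coeff n (v - PowerSeries.C a1) = coeff (n + 1) t := by
        rw [map_sub, coeff_C, if_neg (by omega), sub_zero, htv, coeff_succ_X_mul]
      rw [← h1, ← hu, h2]
    set aj := coeff (n + 1) t with hajdef
    -- coefficient of order n of the equation
    have hn := congrArg (coeff n) heq
    -- LHS
    have hL : coeff n ((PowerSeries.C c + PowerSeries.C r * t ^ l) * t.derivativeFun)
        = c * (aj * (n + 1 : k)) := by
      erw [add_mul, map_add, coeff_C_mul, coeff_derivative]
      have hrw : PowerSeries.C r * t ^ l * t.derivativeFun
          = X ^ l * (PowerSeries.C r * v ^ l * t.derivativeFun) := by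
        rw [htv, mul_pow]; ring
      rw [hrw, hdvd_coeff _ _ _ (by omega), add_zero]
    -- RHS
    have hvpow : coeff n (v ^ (l + 1)) = a1 ^ l * aj * (l + 1 : k) := by
      rw [hveq, add_pow, map_sum]
      rw [Finset.sum_eq_single l]
      · rw [Nat.add_sub_cancel_left, pow_one, Nat.choose_succ_self_right]
        have : PowerSeries.C a1 ^ l * (X ^ n * u) * ((l + 1 : ℕ) : k⟦X⟧)
            = X ^ n * (PowerSeries.C a1 ^ l * u * ((l + 1 : ℕ) : k⟦X⟧)) := by ring
        rw [this]
        have := coeff_X_pow_mul (PowerSeries.C a1 ^ l * u * ((l + 1 : ℕ) : k⟦X⟧)) n 0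
        rw [zero_add] at this
        rw [this]
        rw [coeff_zero_eq_constantCoeff_apply, map_mul, map_mul, map_pow, constantCoeff_C,
          map_natCast, ← coeff_zero_eq_constantCoeff_apply, hu0]
        push_cast; ring
      · intro m hm hml
        rcases Nat.lt_or_ge m l with hlt | hge
        · have h2le : 2 ≤ l + 1 - m := by omega
          have : PowerSeries.C a1 ^ m * (X ^ n * u) ^ (l + 1 - m) * (((l+1).choose m : ℕ) : k⟦X⟧)
              = X ^ (n * (l + 1 - m)) *
                (PowerSeries.C a1 ^ m * u ^ (l + 1 - m) * (((l+1).choose m : ℕ) : k⟦X⟧)) := by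
            rw [mul_pow, ← pow_mul]; ring
          rw [this, hdvd_coeff]
          calc n < n * 2 := by omega
            _ ≤ n * (l + 1 - m) := Nat.mul_le_mul_left n h2le
        · have hm1 : m = l + 1 := by
            rcases Nat.lt_or_ge m (l + 1) with h | h
            · omega
            · have := Finset.mem_range.mp hm; omega
          subst hm1
          rw [Nat.sub_self, pow_zero, mul_one, Nat.choose_self, Nat.cast_one, mul_one,
            ← map_pow, coeff_C, if_neg (by omega)]
      · intro h
        exact absurd (Finset.mem_range.mpr (by omega)) h
    have hR : coeff n (v ^ (l + 1) * (PowerSeries.C e + PowerSeries.C r * X ^ l))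
        = e * (a1 ^ l * aj * (l + 1 : k)) := by
      rw [mul_add, map_add, mul_comm (v ^ (l+1)) (PowerSeries.C e), coeff_C_mul, hvpow]
      have hrw : v ^ (l + 1) * (PowerSeries.C r * X ^ l)
          = X ^ l * (PowerSeries.C r * v ^ (l + 1)) := by ring
      rw [hrw, hdvd_coeff _ _ _ (by omega), add_zero]
    rw [hL, hR] at hn
    -- conclude aj = 0
    have hln : ((l - n : ℕ) : k) ≠ 0 := hcast (l - n) (by omega) (by omega)
    have hlncast : ((l - n : ℕ) : k) = (l : k) - (n : k) := by
      push_cast [Nat.cast_sub (by omega : n ≤ l)]; ring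
    have hfin : c * aj * ((l - n : ℕ) : k) = 0 := by
      rw [hlncast, hce]
      linear_combination aj * ((n : k) + 1) * hce - hn
    rcases mul_eq_zero.mp hfin with h | h
    · rcases mul_eq_zero.mp h with h | h
      · exact absurd h hc
      · exact h
    · exact absurd h hln
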